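/- For a continuous function f on [a,b] with continuous second derivative and its piecewise linear interpolant s on a partition of mesh Δx, at every point x interior to a subinterval, |f'(x) - s'(x)| ≤ (1/2) (Δx) · max_{a ≤ t ≤ b} |f''(t)|. -/

import Mathlib

/-- Piecewise linear interpolation derivative error bound: at every point interior
to a subinterval, `|f'(x) - s'(x)| ≤ (1/2) Δx · max |f''|`, where `s'` equals the
slope `(f(x_j) - f(x_{j-1}))/(x_j - x_{j-1})` on the interior of `[x_{j-1}, x_j]`. -/
theorem stmt1 (p : ℕ) (hp : 0 < p) (a b : ℝ) (hab : a < b)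
    (f f' f'' s' : ℝ → ℝ) (x : Fin (p + 1) → ℝ)
    (hx0 : x 0 = a) (hxp : x (Fin.last p) = b) (hmono : StrictMono x)
    (hf' : ∀ t ∈ Set.Icc a b, HasDerivWithinAt f (f' t) (Set.Icc a b) t)
    (hf'' : ∀ t ∈ Set.Icc a b, HasDerivWithinAt f' (f'' t) (Set.Icc a b) t)
    (hcont : ContinuousOn f'' (Set.Icc a b))
    (Δx M : ℝ)
    (hΔ : ∀ j : Fin p, x j.succ - x j.castSucc ≤ Δx)
    (hM : ∀ t ∈ Set.Icc a b, |f'' t| ≤ M)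
    (hs' : ∀ j : Fin p, ∀ t ∈ Set.Ioo (x j.castSucc) (x j.succ),
        s' t = (f (x j.succ) - f (x j.castSucc)) / (x j.succ - x j.castSucc)) :
    ∀ j : Fin p, ∀ t ∈ Set.Ioo (x j.castSucc) (x j.succ),
      |f' t - s' t| ≤ (1 / 2) * Δx * M := by
  intro j t ht
  set l := x j.castSucc with hl
  set r := x j.succ with hr
  have hlr : l < r := hmono (Fin.castSucc_lt_succ : j.castSucc < j.succ)
  have hal : a ≤ l := hx0 ▸ hmono.monotone (Fin.zero_le _)
  have hrb : r ≤ b := hxp ▸ hmono.monotone (Fin.le_last _)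
  have hsub : Set.Icc l r ⊆ Set.Icc a b := Set.Icc_subset_Icc hal hrb
  obtain ⟨htl, htr⟩ := ht
  have htab : t ∈ Set.Icc a b := ⟨hal.trans htl.le, htr.le.trans hrb⟩
  have hM0 : 0 ≤ M := (abs_nonneg _).trans (hM a ⟨le_refl a, hab.le⟩)
  have hcontf' : ContinuousOn f' (Set.Icc a b) :=
    fun u hu => (hf'' u hu).differentiableWithinAt.continuousWithinAt
  have hcontf : ContinuousOn f (Set.Icc a b) :=
    fun u hu => (hf' u hu).differentiableWithinAt.continuousWithinAt
  have hint : IntervalIntegrable f' MeasureTheory.volume l r :=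
    (hcontf'.mono hsub).intervalIntegrable_of_Icc hlr.le
  have hftc : ∫ u in l..r, f' u = f r - f l := by
    apply intervalIntegral.integral_eq_sub_of_hasDeriv_right_of_le hlr.le
      (hcontf.mono hsub) ?_ hint
    intro u hu
    have huab : u ∈ Set.Ioo a b := ⟨hal.trans_lt hu.1, hu.2.trans_le hrb⟩
    exact ((hf' u (Set.Ioo_subset_Icc_self huab)).hasDerivAt
      (Icc_mem_nhds huab.1 huab.2)).hasDerivWithinAt
  rw [hs' j t ⟨htl, htr⟩]
  have hlip : ∀ u ∈ Set.Icc a b, |f' t - f' u| ≤ M * |t - u| := by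
    intro u hu
    have := (convex_Icc a b).norm_image_sub_le_of_norm_hasDerivWithin_le
      (fun v hv => hf'' v hv) (fun v hv => by rw [Real.norm_eq_abs]; exact hM v hv)
      hu htab
    simpa [Real.norm_eq_abs] using this
  have hintc : IntervalIntegrable (fun u => f' t - f' u) MeasureTheory.volume l r :=
    intervalIntegrable_const.sub hint
  have hI : ∫ u in l..r, (f' t - f' u) = (r - l) * f' t - (f r - f l) := by
    rw [intervalIntegral.integral_sub intervalIntegrable_const hint, hftc,
      intervalIntegral.integral_const, smul_eq_mul]
  -- bound pieces
  have habs1 : |∫ u in l..t, (f' t - f' u)| ≤ M * (t - l) ^ 2 / 2 := by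
    have hiz : IntervalIntegrable (fun u => f' t - f' u) MeasureTheory.volume l t :=
      hintc.mono_set (by
        rw [Set.uIcc_of_le htl.le, Set.uIcc_of_le hlr.le]
        exact Set.Icc_subset_Icc le_rfl htr.le)
    have hcalc : ∫ u in l..t, M * (t - u) = M * (t - l) ^ 2 / 2 := by
      have h0 : (∫ u in l..t, (t - u)) =
          (t * t - t ^ 2 / 2) - (t * l - l ^ 2 / 2) :=
        intervalIntegral.integral_eq_sub_of_hasDerivAt
          (fun u _ => by
            have h1 : HasDerivAt (fun u : ℝ => t * u - u ^ 2 / 2)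
                (t * 1 - 2 * u ^ 1 / 2) u :=
              ((hasDerivAt_id u).const_mul t).sub ((hasDerivAt_pow 2 u).div_const 2)
            simpa using h1)
          ((by fun_prop : Continuous fun u : ℝ => t - u).intervalIntegrable _ _)
      rw [intervalIntegral.integral_const_mul, h0]; ring
    calc |∫ u in l..t, (f' t - f' u)| ≤ ∫ u in l..t, |f' t - f' u| :=
          intervalIntegral.abs_integral_le_integral_abs htl.le
      _ ≤ ∫ u in l..t, M * (t - u) := by
          apply intervalIntegral.integral_mono_on htl.le hiz.abs
          · exact (continuous_const.mul (continuous_const.sub continuous_id)).intervalIntegrable _ _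
          · intro u hu
            have huab : u ∈ Set.Icc a b := ⟨hal.trans hu.1, (hu.2.trans htr.le).trans hrb⟩
            calc |f' t - f' u| ≤ M * |t - u| := hlip u huab
              _ = M * (t - u) := by rw [abs_of_nonneg (by linarith [hu.2])]
      _ = M * (t - l) ^ 2 / 2 := hcalc
  have habs2 : |∫ u in t..r, (f' t - f' u)| ≤ M * (r - t) ^ 2 / 2 := by
    have hiz : IntervalIntegrable (fun u => f' t - f' u) MeasureTheory.volume t r :=
      hintc.mono_set (by
        rw [Set.uIcc_of_le htr.le, Set.uIcc_of_le hlr.le]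
        exact Set.Icc_subset_Icc htl.le le_rfl)
    have hcalc : ∫ u in t..r, M * (u - t) = M * (r - t) ^ 2 / 2 := by
      have h0 : (∫ u in t..r, (u - t)) =
          (r ^ 2 / 2 - t * r) - (t ^ 2 / 2 - t * t) :=
        intervalIntegral.integral_eq_sub_of_hasDerivAt
          (fun u _ => by
            have h1 : HasDerivAt (fun u : ℝ => u ^ 2 / 2 - t * u)
                (2 * u ^ 1 / 2 - t * 1) u :=
              ((hasDerivAt_pow 2 u).div_const 2).sub ((hasDerivAt_id u).const_mul t)
            simpa using h1)
          ((by fun_prop : Continuous fun u : ℝ => u - t).intervalIntegrable _ _)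
      rw [intervalIntegral.integral_const_mul, h0]; ring
    calc |∫ u in t..r, (f' t - f' u)| ≤ ∫ u in t..r, |f' t - f' u| :=
          intervalIntegral.abs_integral_le_integral_abs htr.le
      _ ≤ ∫ u in t..r, M * (u - t) := by
          apply intervalIntegral.integral_mono_on htr.le hiz.abs
          · exact (continuous_const.mul (continuous_id.sub continuous_const)).intervalIntegrable _ _
          · intro u hu
            have huab : u ∈ Set.Icc a b := ⟨hal.trans (htl.le.trans hu.1), hu.2.trans hrb⟩
            calc |f' t - f' u| ≤ M * |t - u| := hlip u huab
              _ = M * (u - t) := by rw [abs_sub_comm, abs_of_nonneg (by linarith [hu.1])]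
      _ = M * (r - t) ^ 2 / 2 := hcalc
  have hsplit : (∫ u in l..r, (f' t - f' u)) =
      (∫ u in l..t, (f' t - f' u)) + ∫ u in t..r, (f' t - f' u) :=
    (intervalIntegral.integral_add_adjacent_intervals
      (hintc.mono_set (by
        rw [Set.uIcc_of_le htl.le, Set.uIcc_of_le hlr.le]
        exact Set.Icc_subset_Icc le_rfl htr.le))
      (hintc.mono_set (by
        rw [Set.uIcc_of_le htr.le, Set.uIcc_of_le hlr.le]
        exact Set.Icc_subset_Icc htl.le le_rfl))).symm
  have hbound : |(r - l) * f' t - (f r - f l)| ≤ (1 / 2) * Δx * M * (r - l) := by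
    rw [← hI, hsplit]
    have h1 := habs1; have h2 := habs2
    have hd : r - l ≤ Δx := hΔ j
    have hsq : (t - l) ^ 2 + (r - t) ^ 2 ≤ (r - l) ^ 2 := by nlinarith
    calc |(∫ u in l..t, (f' t - f' u)) + ∫ u in t..r, (f' t - f' u)|
        ≤ |∫ u in l..t, (f' t - f' u)| + |∫ u in t..r, (f' t - f' u)| := abs_add_le _ _
      _ ≤ M * (t - l) ^ 2 / 2 + M * (r - t) ^ 2 / 2 := add_le_add h1 h2
      _ ≤ M * (r - l) ^ 2 / 2 := by nlinarith
      _ ≤ (1 / 2) * Δx * M * (r - l) := by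
          have h3 : 0 ≤ M * (r - l) := mul_nonneg hM0 (by linarith)
          nlinarith [mul_le_mul_of_nonneg_left hd h3]
  have hne : r - l > 0 := by linarith
  have : f' t - (f r - f l) / (r - l) = ((r - l) * f' t - (f r - f l)) / (r - l) := by
    field_simp
  rw [this, abs_div, abs_of_pos hne, div_le_iff₀ hne]
  exact hbound
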